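/- Integrality of the state-transition network-flow polytope: every extreme point of the polyhedron of vectors (w, y, z, θ) (with w_t for t ∈ [t0,T], y_{tk} for (t,k) ∈ TK², z_{kt} for (k,t) ∈ KT, θ_t for t ∈ [t0,T−1]) satisfying the constraints (c1) Σ_{t=t0}^{T} w_t = 1; (c2) −w_t + Σ_{k:(t,k)∈KT} z_{tk} − Σ_{k:(k,t)∈TK²} y_{kt} + θ_t = 0 for all t ∈ [t0, T−1]; (c3) Σ_{k:(t,k)∈TK²} y_{tk} − Σ_{k:(k,t)∈KT} z_{kt} = 0 for all t ∈ [t0+ℓ+1, T]; together with w, y, z ≥ 0 and θ_t ≥ 0 for t ∈ [t0, T−ℓ−1], has all of its coordinates in {0,1}. -/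

import Mathlib

namespace EUC

/-- Index set `TK¹ = {(1,k) : k ∈ [max(t0,1), T]}`. -/
noncomputable def TK1 (t0 T : ℤ) : Finset (ℤ × ℤ) :=
  (Finset.Icc (max t0 1) T).image fun k => ((1 : ℤ), k)

/-- Index set `TK² = {(t,k) : t ∈ [t0+ℓ+1, T], k ∈ [min(t+L−1, T), T]}`. -/
noncomputable def TK2 (t0 T L l : ℤ) : Finset (ℤ × ℤ) :=
  (Finset.Icc (t0 + l + 1) T).biUnion fun t =>
    (Finset.Icc (min (t + L - 1) T) T).image fun k => (t, k)

/-- Index set `TK = TK¹ ∪ TK²`. -/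
noncomputable def TK (t0 T L l : ℤ) : Finset (ℤ × ℤ) := TK1 t0 T ∪ TK2 t0 T L l

/-- Index set `KT = {(k,t) : k ∈ [t0, T−ℓ−1], t ∈ [k+ℓ+1, T]}`. -/
noncomputable def KT (t0 T l : ℤ) : Finset (ℤ × ℤ) :=
  (Finset.Icc t0 (T - l - 1)).biUnion fun k =>
    (Finset.Icc (k + l + 1) T).image fun t => (k, t)

/-- The space of EUC vectors `(w, y, z, θ, q, φ)`. -/
abbrev Pt : Type :=
  (ℤ → ℝ) × (ℤ → ℤ → ℝ) × (ℤ → ℤ → ℝ) × (ℤ → ℝ) × (ℤ → ℤ → ℤ → ℝ) × (ℤ → ℤ → ℤ → ℝ)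

def wOf (x : Pt) : ℤ → ℝ := x.1
def yOf (x : Pt) : ℤ → ℤ → ℝ := x.2.1
def zOf (x : Pt) : ℤ → ℤ → ℝ := x.2.2.1
def thOf (x : Pt) : ℤ → ℝ := x.2.2.2.1
def qOf (x : Pt) : ℤ → ℤ → ℤ → ℝ := x.2.2.2.2.1
def phOf (x : Pt) : ℤ → ℤ → ℤ → ℝ := x.2.2.2.2.2

/-- Membership in the EUC polyhedron `X_I`; coordinates outside the index sets
are fixed to `0` (the standard embedding of the polyhedron described on the
variables `w_t (t ∈ [t0,T])`, `y_{tk} ((t,k) ∈ TK²)`, `z_{kt} ((k,t) ∈ KT)`,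
`θ_t (t ∈ [t0,T−1])`, `q_{tk}^s, φ_{tk}^s ((t,k) ∈ TK, s ∈ [t,k])`). -/
def memXI (T L l t0 : ℤ) (Cmin Cmax Vbar V : ℝ) (N : ℤ)
    (a b : ℤ → ℤ → ℝ) (x : Pt) : Prop :=
  (∑ t ∈ Finset.Icc t0 T, wOf x t) = 1 ∧
  (∀ t ∈ Finset.Icc t0 (T - 1),
    -wOf x t + (∑ p ∈ (KT t0 T l).filter (fun p => p.1 = t), zOf x p.1 p.2)
      - (∑ p ∈ (TK2 t0 T L l).filter (fun p => p.2 = t), yOf x p.1 p.2)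
      + thOf x t = 0) ∧
  (∀ t ∈ Finset.Icc (t0 + l + 1) T,
    (∑ p ∈ (TK2 t0 T L l).filter (fun p => p.1 = t), yOf x p.1 p.2)
      - (∑ p ∈ (KT t0 T l).filter (fun p => p.2 = t), zOf x p.1 p.2) = 0) ∧
  (∀ p ∈ TK1 t0 T, ∀ s ∈ Finset.Icc p.1 p.2,
    Cmin * wOf x p.2 ≤ qOf x p.1 p.2 s ∧ qOf x p.1 p.2 s ≤ Cmax * wOf x p.2) ∧
  (∀ p ∈ TK2 t0 T L l, ∀ s ∈ Finset.Icc p.1 p.2,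
    Cmin * yOf x p.1 p.2 ≤ qOf x p.1 p.2 s ∧ qOf x p.1 p.2 s ≤ Cmax * yOf x p.1 p.2) ∧
  (∀ p ∈ TK2 t0 T L l, qOf x p.1 p.2 p.1 ≤ Vbar * yOf x p.1 p.2) ∧
  (∀ p ∈ TK1 t0 T, p.2 ≤ T - 1 → qOf x p.1 p.2 p.2 ≤ Vbar * wOf x p.2) ∧
  (∀ p ∈ TK2 t0 T L l, p.2 ≤ T - 1 → qOf x p.1 p.2 p.2 ≤ Vbar * yOf x p.1 p.2) ∧
  (∀ p ∈ TK1 t0 T, ∀ s ∈ Finset.Icc (p.1 + 1) p.2,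
    |qOf x p.1 p.2 s - qOf x p.1 p.2 (s - 1)| ≤ V * wOf x p.2) ∧
  (∀ p ∈ TK2 t0 T L l, ∀ s ∈ Finset.Icc (p.1 + 1) p.2,
    |qOf x p.1 p.2 s - qOf x p.1 p.2 (s - 1)| ≤ V * yOf x p.1 p.2) ∧
  (∀ p ∈ TK1 t0 T, ∀ s ∈ Finset.Icc p.1 p.2, ∀ j ∈ Finset.Icc 1 N,
    a j s * qOf x p.1 p.2 s + b j s * wOf x p.2 ≤ phOf x p.1 p.2 s) ∧
  (∀ p ∈ TK2 t0 T L l, ∀ s ∈ Finset.Icc p.1 p.2, ∀ j ∈ Finset.Icc 1 N,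
    a j s * qOf x p.1 p.2 s + b j s * yOf x p.1 p.2 ≤ phOf x p.1 p.2 s) ∧
  (∀ t ∈ Finset.Icc t0 T, 0 ≤ wOf x t) ∧
  (∀ p ∈ TK2 t0 T L l, 0 ≤ yOf x p.1 p.2) ∧
  (∀ p ∈ KT t0 T l, 0 ≤ zOf x p.1 p.2) ∧
  (∀ t ∈ Finset.Icc t0 (T - l - 1), 0 ≤ thOf x t) ∧
  (∀ t, t ∉ Finset.Icc t0 T → wOf x t = 0) ∧
  (∀ t k, (t, k) ∉ TK2 t0 T L l → yOf x t k = 0) ∧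
  (∀ k t, (k, t) ∉ KT t0 T l → zOf x k t = 0) ∧
  (∀ t, t ∉ Finset.Icc t0 (T - 1) → thOf x t = 0) ∧
  (∀ t k s, ((t, k) ∉ TK t0 T L l ∨ s ∉ Finset.Icc t k) →
    qOf x t k s = 0 ∧ phOf x t k s = 0)

/-- A point of `X_I` is binary if all of its `w, y, z, θ` coordinates lie in `{0,1}`. -/
def BinaryPt (T L l t0 : ℤ) (x : Pt) : Prop :=
  (∀ t ∈ Finset.Icc t0 T, wOf x t = 0 ∨ wOf x t = 1) ∧
  (∀ p ∈ TK2 t0 T L l, yOf x p.1 p.2 = 0 ∨ yOf x p.1 p.2 = 1) ∧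
  (∀ p ∈ KT t0 T l, zOf x p.1 p.2 = 0 ∨ zOf x p.1 p.2 = 1) ∧
  (∀ t ∈ Finset.Icc t0 (T - 1), thOf x t = 0 ∨ thOf x t = 1)

/-- The EUC objective `G`. -/
noncomputable def Gobj (T L l t0 s0 : ℤ) (S S' : ℤ → ℝ) (x : Pt) : ℝ :=
  (∑ t ∈ Finset.Icc t0 (T - 1), S' (t + s0) * wOf x t)
  + (∑ p ∈ (TK2 t0 T L l).filter (fun p => p.2 ≤ T - 1), S' (p.2 - p.1 + 1) * yOf x p.1 p.2)
  + (∑ p ∈ KT t0 T l, S (p.2 - p.1 - 1) * zOf x p.1 p.2)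
  + (∑ p ∈ TK t0 T L l, ∑ s ∈ Finset.Icc p.1 p.2, phOf x p.1 p.2 s)

/-- Aggregate output `Q(x)_s = Σ_{(t,k)∈TK : t≤s≤k} q_{tk}^s`. -/
noncomputable def Qout (T L l t0 : ℤ) (x : Pt) (s : ℤ) : ℝ :=
  ∑ p ∈ (TK t0 T L l).filter (fun p => p.1 ≤ s ∧ s ≤ p.2), qOf x p.1 p.2 s

/-- Inner product `⟨π, f⟩ = Σ_{s=1}^{T} π_s f_s` of vectors indexed by `[1,T]`. -/
noncomputable def priceInner (T : ℤ) (pr f : ℤ → ℝ) : ℝ := ∑ s ∈ Finset.Icc 1 T, pr s * f s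

/-- `max_{1≤j≤N} (a_j^t·xx + b_j^t·uu)`, the piecewise-linear net cost. -/
noncomputable def fmax (N : ℤ) (hN : 1 ≤ N) (a b : ℤ → ℤ → ℝ) (t : ℤ) (uu xx : ℝ) : ℝ :=
  (Finset.Icc 1 N).sup' (Finset.nonempty_Icc.mpr hN) (fun j => a j t * xx + b j t * uu)

/-- Feasibility for the 2-Bin unit-commitment MIP (binary requirements on `u, v`
included; the convention `u_0 := 1` is built in via `ue`). -/
def TwoBinFeas (T L l t0 s0 : ℤ) (Cmin Cmax Vbar V : ℝ) (S S' : ℤ → ℝ)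
    (u v xg zt zt' : ℤ → ℝ) : Prop :=
  let ue : ℤ → ℝ := fun t => if t = 0 then 1 else u t
  (∀ t ∈ Finset.Icc (1 : ℤ) T, u t = 0 ∨ u t = 1) ∧
  (∀ t ∈ Finset.Icc (1 : ℤ) T, v t = 0 ∨ v t = 1) ∧
  (∀ t ∈ Finset.Icc (t0 + l + 1) T, 0 ≤ zt t) ∧
  (∀ t ∈ Finset.Icc t0 (T - 1), 0 ≤ zt' t) ∧
  (∀ t ∈ Finset.Icc (1 : ℤ) t0, u t = 1) ∧
  (∀ t ∈ Finset.Icc (t0 + l + L) T, (∑ i ∈ Finset.Icc (t - L + 1) t, v i) ≤ u t) ∧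
  (∀ t ∈ Finset.Icc (t0 + l) T, (∑ i ∈ Finset.Icc (t - l + 1) t, v i) ≤ 1 - ue (t - l)) ∧
  (∀ t ∈ Finset.Icc (1 : ℤ) T, u t - ue (t - 1) - v t ≤ 0) ∧
  (∀ t ∈ Finset.Icc (1 : ℤ) T, Cmin * u t ≤ xg t ∧ xg t ≤ Cmax * u t) ∧
  (∀ t ∈ Finset.Icc (2 : ℤ) T, xg t - xg (t - 1) ≤ V * u (t - 1) + Vbar * (1 - u (t - 1))) ∧
  (∀ t ∈ Finset.Icc (2 : ℤ) T, xg (t - 1) - xg t ≤ V * u t + Vbar * (1 - u t)) ∧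
  (∀ t ∈ Finset.Icc t0 (T - 1),
    S' (t + s0) * (1 - u (t + 1) - ∑ s ∈ Finset.Icc 1 t, (1 - u s)) ≤ zt' t) ∧
  (∀ t ∈ Finset.Icc (t0 + l + L) (T - 1), ∀ k ∈ Finset.Icc (t0 + l + 1) (t - L + 1),
    S' (t - k + 1) * (v k - ∑ s ∈ Finset.Icc k t, (1 - u s)) ≤ zt' t) ∧
  (∀ t ∈ Finset.Icc (t0 + l + 1) T, ∀ k ∈ Finset.Icc t0 (t - l - 1),
    S (t - k - 1) * (v t - ∑ s ∈ Finset.Icc (k + 1) (t - 1), u s) ≤ zt t)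

/-- Objective of the 2-Bin unit-commitment MIP. -/
noncomputable def TwoBinObj (T l t0 : ℤ) (N : ℤ) (hN : 1 ≤ N) (a b : ℤ → ℤ → ℝ)
    (u xg zt zt' : ℤ → ℝ) : ℝ :=
  (∑ t ∈ Finset.Icc (1 : ℤ) T, fmax N hN a b t (u t) (xg t))
  + (∑ t ∈ Finset.Icc (t0 + l + 1) T, zt t)
  + (∑ t ∈ Finset.Icc t0 (T - 1), zt' t)

/-- Feasibility for the economic-dispatch problem on the on-interval `[t,k]`. -/
def EDfeas (T : ℤ) (Cmin Cmax Vbar V : ℝ) (t k : ℤ) (xg : ℤ → ℝ) : Prop :=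
  (∀ s ∈ Finset.Icc t k, Cmin ≤ xg s ∧ xg s ≤ Cmax) ∧
  (2 ≤ t → xg t ≤ Vbar) ∧
  (k ≤ T - 1 → xg k ≤ Vbar) ∧
  (∀ s ∈ Finset.Icc (t + 1) k, |xg s - xg (s - 1)| ≤ V)

/-- The economic-dispatch value `C(t,k)`. -/
noncomputable def Cval (T : ℤ) (Cmin Cmax Vbar V : ℝ) (N : ℤ) (hN : 1 ≤ N) (a b : ℤ → ℤ → ℝ)
    (t k : ℤ) : ℝ :=
  sInf {r : ℝ | ∃ xg : ℤ → ℝ, EDfeas T Cmin Cmax Vbar V t k xg ∧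
    r = ∑ s ∈ Finset.Icc t k, fmax N hN a b s 1 (xg s)}

/-- Commitment status recovered from an EUC point:
`u_s = Σ_{(1,k)∈TK¹ : k≥s} w_k + Σ_{(t,k)∈TK² : t≤s≤k} y_{tk}`. -/
noncomputable def usol (T L l t0 : ℤ) (x : Pt) (s : ℤ) : ℝ :=
  (∑ p ∈ (TK1 t0 T).filter (fun p => s ≤ p.2), wOf x p.2)
  + (∑ p ∈ (TK2 t0 T L l).filter (fun p => p.1 ≤ s ∧ s ≤ p.2), yOf x p.1 p.2)

/-- Start-up status recovered from an EUC point: `v_s = Σ_{(k,t)∈KT : t=s} z_{kt}`. -/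
noncomputable def vsol (T l t0 : ℤ) (x : Pt) (s : ℤ) : ℝ :=
  ∑ p ∈ (KT t0 T l).filter (fun p => p.2 = s), zOf x p.1 p.2


/-- The space of state-transition flow vectors `(w, y, z, θ)`. -/
abbrev Pt3 : Type := (ℤ → ℝ) × (ℤ → ℤ → ℝ) × (ℤ → ℤ → ℝ) × (ℤ → ℝ)

/-- The state-transition network-flow polytope on `(w, y, z, θ)`; coordinates
outside the index sets are fixed to `0`. -/
def memFlow (T L l t0 : ℤ) (p : Pt3) : Prop :=
  (∑ t ∈ Finset.Icc t0 T, p.1 t) = 1 ∧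
  (∀ t ∈ Finset.Icc t0 (T - 1),
    -p.1 t + (∑ e ∈ (KT t0 T l).filter (fun e => e.1 = t), p.2.2.1 e.1 e.2)
      - (∑ e ∈ (TK2 t0 T L l).filter (fun e => e.2 = t), p.2.1 e.1 e.2)
      + p.2.2.2 t = 0) ∧
  (∀ t ∈ Finset.Icc (t0 + l + 1) T,
    (∑ e ∈ (TK2 t0 T L l).filter (fun e => e.1 = t), p.2.1 e.1 e.2)
      - (∑ e ∈ (KT t0 T l).filter (fun e => e.2 = t), p.2.2.1 e.1 e.2) = 0) ∧
  (∀ t ∈ Finset.Icc t0 T, 0 ≤ p.1 t) ∧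
  (∀ e ∈ TK2 t0 T L l, 0 ≤ p.2.1 e.1 e.2) ∧
  (∀ e ∈ KT t0 T l, 0 ≤ p.2.2.1 e.1 e.2) ∧
  (∀ t ∈ Finset.Icc t0 (T - l - 1), 0 ≤ p.2.2.2 t) ∧
  (∀ t, t ∉ Finset.Icc t0 T → p.1 t = 0) ∧
  (∀ t k, (t, k) ∉ TK2 t0 T L l → p.2.1 t k = 0) ∧
  (∀ k t, (k, t) ∉ KT t0 T l → p.2.2.1 k t = 0) ∧
  (∀ t, t ∉ Finset.Icc t0 (T - 1) → p.2.2.2 t = 0)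

section FlowProof

open Finset

variable {T L l t0 : ℤ}

private lemma memTK2 {e : ℤ × ℤ} :
    e ∈ TK2 t0 T L l ↔
      t0 + l + 1 ≤ e.1 ∧ e.1 ≤ T ∧ min (e.1 + L - 1) T ≤ e.2 ∧ e.2 ≤ T := by
  constructor
  · intro h
    simp only [TK2, Finset.mem_biUnion, Finset.mem_image, Finset.mem_Icc] at h
    obtain ⟨a, ⟨h1, h2⟩, b, ⟨h3, h4⟩, rfl⟩ := h
    exact ⟨h1, h2, h3, h4⟩
  · rintro ⟨h1, h2, h3, h4⟩
    simp only [TK2, Finset.mem_biUnion, Finset.mem_image, Finset.mem_Icc]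
    exact ⟨e.1, ⟨h1, h2⟩, e.2, ⟨h3, h4⟩, Prod.mk.eta⟩

private lemma memKT {e : ℤ × ℤ} :
    e ∈ KT t0 T l ↔
      t0 ≤ e.1 ∧ e.1 ≤ T - l - 1 ∧ e.1 + l + 1 ≤ e.2 ∧ e.2 ≤ T := by
  constructor
  · intro h
    simp only [KT, Finset.mem_biUnion, Finset.mem_image, Finset.mem_Icc] at h
    obtain ⟨a, ⟨h1, h2⟩, b, ⟨h3, h4⟩, rfl⟩ := h
    exact ⟨h1, h2, h3, h4⟩
  · rintro ⟨h1, h2, h3, h4⟩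
    simp only [KT, Finset.mem_biUnion, Finset.mem_image, Finset.mem_Icc]
    exact ⟨e.1, ⟨h1, h2⟩, e.2, ⟨h3, h4⟩, Prod.mk.eta⟩

private lemma TK2_fst_le_snd (hL : 1 ≤ L) {e : ℤ × ℤ} (he : e ∈ TK2 t0 T L l) :
    e.1 ≤ e.2 := by
  have h := memTK2.mp he
  omega

private lemma w_nn {p : Pt3} (hp : memFlow T L l t0 p) (a : ℤ) : 0 ≤ p.1 a := by
  obtain ⟨_, _, _, hwn, _, _, _, hwv, _, _, _⟩ := hp
  by_cases h : a ∈ Finset.Icc t0 T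
  · exact hwn a h
  · rw [hwv a h]

private lemma y_nn {p : Pt3} (hp : memFlow T L l t0 p) (a b : ℤ) : 0 ≤ p.2.1 a b := by
  obtain ⟨_, _, _, _, hyn, _, _, _, hyv, _, _⟩ := hp
  by_cases h : (a, b) ∈ TK2 t0 T L l
  · exact hyn (a, b) h
  · rw [hyv a b h]

private lemma z_nn {p : Pt3} (hp : memFlow T L l t0 p) (a b : ℤ) : 0 ≤ p.2.2.1 a b := by
  obtain ⟨_, _, _, _, _, hzn, _, _, _, hzv, _⟩ := hp
  by_cases h : (a, b) ∈ KT t0 T l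
  · exact hzn (a, b) h
  · rw [hzv a b h]

private lemma th_nn {p : Pt3} (hp : memFlow T L l t0 p) (a : ℤ) : 0 ≤ p.2.2.2 a := by
  obtain ⟨_, hc2, _, hwn, hyn, _, htn, hwv, hyv, hzv, htv⟩ := hp
  by_cases h : a ∈ Finset.Icc t0 (T - 1)
  · rw [Finset.mem_Icc] at h
    by_cases h2 : a ≤ T - l - 1
    · exact htn a (Finset.mem_Icc.mpr ⟨h.1, h2⟩)
    · have hc := hc2 a (Finset.mem_Icc.mpr h)
      have hz0 : (∑ e ∈ (KT t0 T l).filter (fun e => e.1 = a), p.2.2.1 e.1 e.2) = 0 := by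
        apply Finset.sum_eq_zero
        intro e he
        rw [Finset.mem_filter] at he
        have := memKT.mp he.1
        omega
      have hy0 : 0 ≤ ∑ e ∈ (TK2 t0 T L l).filter (fun e => e.2 = a), p.2.1 e.1 e.2 := by
        apply Finset.sum_nonneg
        intro e he
        by_cases hh : e ∈ TK2 t0 T L l
        · exact hyn e hh
        · rw [Finset.mem_filter] at he; exact absurd he.1 hh
      have hw0 : 0 ≤ p.1 a := by
        by_cases hh : a ∈ Finset.Icc t0 T
        · exact hwn a hh
        · rw [hwv a hh]
      linarith
  · rw [htv a h]

/-- The terminal identity: summing all conservation constraints. -/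
private lemma terminal_id (hL : 1 ≤ L) (hl : 1 ≤ l) {p : Pt3}
    (hc2 : ∀ t ∈ Finset.Icc t0 (T - 1),
      -p.1 t + (∑ e ∈ (KT t0 T l).filter (fun e => e.1 = t), p.2.2.1 e.1 e.2)
        - (∑ e ∈ (TK2 t0 T L l).filter (fun e => e.2 = t), p.2.1 e.1 e.2)
        + p.2.2.2 t = 0)
    (hc3 : ∀ t ∈ Finset.Icc (t0 + l + 1) T,
      (∑ e ∈ (TK2 t0 T L l).filter (fun e => e.1 = t), p.2.1 e.1 e.2)
        - (∑ e ∈ (KT t0 T l).filter (fun e => e.2 = t), p.2.2.1 e.1 e.2) = 0) :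
    (∑ a ∈ Finset.Icc t0 (T - 1), p.2.2.2 a)
      + (∑ e ∈ (TK2 t0 T L l).filter (fun e => e.2 = T), p.2.1 e.1 e.2)
      = ∑ a ∈ Finset.Icc t0 (T - 1), p.1 a := by
  have hz1 : ∑ a ∈ Finset.Icc t0 (T - 1),
      (∑ e ∈ (KT t0 T l).filter (fun e => e.1 = a), p.2.2.1 e.1 e.2)
      = ∑ e ∈ KT t0 T l, p.2.2.1 e.1 e.2 := by
    apply Finset.sum_fiberwise_of_maps_to
    intro e he
    have := memKT.mp he
    rw [Finset.mem_Icc]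
    omega
  have hz2 : ∑ a ∈ Finset.Icc (t0 + l + 1) T,
      (∑ e ∈ (KT t0 T l).filter (fun e => e.2 = a), p.2.2.1 e.1 e.2)
      = ∑ e ∈ KT t0 T l, p.2.2.1 e.1 e.2 := by
    apply Finset.sum_fiberwise_of_maps_to
    intro e he
    have := memKT.mp he
    rw [Finset.mem_Icc]
    omega
  have hy2 : ∑ a ∈ Finset.Icc (t0 + l + 1) T,
      (∑ e ∈ (TK2 t0 T L l).filter (fun e => e.1 = a), p.2.1 e.1 e.2)
      = ∑ e ∈ TK2 t0 T L l, p.2.1 e.1 e.2 := by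
    apply Finset.sum_fiberwise_of_maps_to
    intro e he
    have := memTK2.mp he
    rw [Finset.mem_Icc]
    omega
  have hy1 : ∑ a ∈ Finset.Icc t0 (T - 1),
      (∑ e ∈ (TK2 t0 T L l).filter (fun e => e.2 = a), p.2.1 e.1 e.2)
      = ∑ e ∈ (TK2 t0 T L l).filter (fun e => ¬ e.2 = T), p.2.1 e.1 e.2 := by
    rw [← Finset.sum_fiberwise_of_maps_to (g := Prod.snd)
      (t := Finset.Icc t0 (T - 1))
      (fun e he => by
        rw [Finset.mem_filter] at he
        have := memTK2.mp he.1
        rw [Finset.mem_Icc]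
        omega)
      (fun e => p.2.1 e.1 e.2)]
    apply Finset.sum_congr rfl
    intro a ha
    rw [Finset.mem_Icc] at ha
    rw [Finset.filter_filter]
    apply Finset.sum_congr _ (fun _ _ => rfl)
    apply Finset.filter_congr
    intro e he
    have := memTK2.mp he
    constructor
    · intro h; exact ⟨by omega, h⟩
    · intro h; exact h.2
  have hsplit : (∑ e ∈ (TK2 t0 T L l).filter (fun e => e.2 = T), p.2.1 e.1 e.2)
      + (∑ e ∈ (TK2 t0 T L l).filter (fun e => ¬ e.2 = T), p.2.1 e.1 e.2)
      = ∑ e ∈ TK2 t0 T L l, p.2.1 e.1 e.2 :=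
    Finset.sum_filter_add_sum_filter_not _ _ _
  have hs2 : ∑ a ∈ Finset.Icc t0 (T - 1),
      (-p.1 a + (∑ e ∈ (KT t0 T l).filter (fun e => e.1 = a), p.2.2.1 e.1 e.2)
        - (∑ e ∈ (TK2 t0 T L l).filter (fun e => e.2 = a), p.2.1 e.1 e.2)
        + p.2.2.2 a) = 0 := Finset.sum_eq_zero hc2
  have hs3 : ∑ a ∈ Finset.Icc (t0 + l + 1) T,
      ((∑ e ∈ (TK2 t0 T L l).filter (fun e => e.1 = a), p.2.1 e.1 e.2)
        - (∑ e ∈ (KT t0 T l).filter (fun e => e.2 = a), p.2.2.1 e.1 e.2)) = 0 :=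
    Finset.sum_eq_zero hc3
  rw [Finset.sum_add_distrib, Finset.sum_sub_distrib, Finset.sum_add_distrib,
    Finset.sum_neg_distrib, hz1, hy1] at hs2
  rw [Finset.sum_sub_distrib, hy2, hz2] at hs3
  linarith

/-- A nonnegative homogeneous flow with zero source is identically zero. -/
private lemma homog_zero (hL : 1 ≤ L) (hl : 1 ≤ l) {q : Pt3}
    (hw : ∀ a, q.1 a = 0)
    (hyn : ∀ a b, 0 ≤ q.2.1 a b) (hzn : ∀ a b, 0 ≤ q.2.2.1 a b)
    (htn : ∀ a ∈ Finset.Icc t0 (T - l - 1), 0 ≤ q.2.2.2 a)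
    (hc2 : ∀ t ∈ Finset.Icc t0 (T - 1),
      -q.1 t + (∑ e ∈ (KT t0 T l).filter (fun e => e.1 = t), q.2.2.1 e.1 e.2)
        - (∑ e ∈ (TK2 t0 T L l).filter (fun e => e.2 = t), q.2.1 e.1 e.2)
        + q.2.2.2 t = 0)
    (hc3 : ∀ t ∈ Finset.Icc (t0 + l + 1) T,
      (∑ e ∈ (TK2 t0 T L l).filter (fun e => e.1 = t), q.2.1 e.1 e.2)
        - (∑ e ∈ (KT t0 T l).filter (fun e => e.2 = t), q.2.2.1 e.1 e.2) = 0)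
    (hyv : ∀ a b, (a, b) ∉ TK2 t0 T L l → q.2.1 a b = 0)
    (hzv : ∀ a b, (a, b) ∉ KT t0 T l → q.2.2.1 a b = 0)
    (htv : ∀ a, a ∉ Finset.Icc t0 (T - 1) → q.2.2.2 a = 0) :
    (∀ a b, q.2.1 a b = 0) ∧ (∀ a b, q.2.2.1 a b = 0) ∧ (∀ a, q.2.2.2 a = 0) := by
  -- θ is nonnegative everywhere on [t0, T-1]
  have htn' : ∀ a ∈ Finset.Icc t0 (T - 1), 0 ≤ q.2.2.2 a := by
    intro a ha
    rw [Finset.mem_Icc] at ha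
    by_cases h2 : a ≤ T - l - 1
    · exact htn a (Finset.mem_Icc.mpr ⟨ha.1, h2⟩)
    · have hc := hc2 a (Finset.mem_Icc.mpr ha)
      have hz0 : (∑ e ∈ (KT t0 T l).filter (fun e => e.1 = a), q.2.2.1 e.1 e.2) = 0 := by
        apply Finset.sum_eq_zero
        intro e he
        rw [Finset.mem_filter] at he
        have := memKT.mp he.1
        omega
      have hy0 : 0 ≤ ∑ e ∈ (TK2 t0 T L l).filter (fun e => e.2 = a), q.2.1 e.1 e.2 :=
        Finset.sum_nonneg fun e _ => hyn e.1 e.2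
      rw [hw a] at hc
      linarith
  have hterm := terminal_id (t0 := t0) hL hl hc2 hc3
  rw [Finset.sum_eq_zero (fun a _ => hw a)] at hterm
  have hθs : 0 ≤ ∑ a ∈ Finset.Icc t0 (T - 1), q.2.2.2 a := Finset.sum_nonneg htn'
  have hyTs : 0 ≤ ∑ e ∈ (TK2 t0 T L l).filter (fun e => e.2 = T), q.2.1 e.1 e.2 :=
    Finset.sum_nonneg fun e _ => hyn e.1 e.2
  have hθ0 : ∀ a ∈ Finset.Icc t0 (T - 1), q.2.2.2 a = 0 := by
    have : ∑ a ∈ Finset.Icc t0 (T - 1), q.2.2.2 a = 0 := by linarith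
    exact fun a ha => (Finset.sum_eq_zero_iff_of_nonneg htn').mp this a ha
  -- main ascending induction killing y and z
  have main : ∀ n : ℕ, (∀ a b : ℤ, a ≤ t0 + n → q.2.1 a b = 0)
      ∧ (∀ a b : ℤ, a ≤ t0 + n → q.2.2.1 a b = 0) := by
    intro n
    induction n with
    | zero =>
      constructor
      · intro a b hab
        apply hyv
        intro h
        have := memTK2.mp h
        simp only at this
        omega
      · intro a b hab
        by_cases hKT : (a, b) ∈ KT t0 T l
        · have hmem := memKT.mp hKT
          simp only at hmem
          have ha : a ∈ Finset.Icc t0 (T - 1) := Finset.mem_Icc.mpr ⟨hmem.1, by omega⟩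
          have hc := hc2 a ha
          have hy0 : (∑ e ∈ (TK2 t0 T L l).filter (fun e => e.2 = a), q.2.1 e.1 e.2) = 0 := by
            apply Finset.sum_eq_zero
            intro e he
            rw [Finset.mem_filter] at he
            have h1 := memTK2.mp he.1
            have h2 : e.1 ≤ e.2 := TK2_fst_le_snd hL he.1
            apply hyv
            intro hcon
            have := memTK2.mp hcon
            omega
          rw [hw a, hθ0 a ha, hy0] at hc
          have hz0 : (∑ e ∈ (KT t0 T l).filter (fun e => e.1 = a), q.2.2.1 e.1 e.2) = 0 := by
            linarith
          have := (Finset.sum_eq_zero_iff_of_nonneg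
            (fun e (_ : e ∈ (KT t0 T l).filter (fun e => e.1 = a)) => hzn e.1 e.2)).mp hz0
            (a, b) (Finset.mem_filter.mpr ⟨hKT, rfl⟩)
          exact this
        · exact hzv a b hKT
    | succ n IH =>
      obtain ⟨IHy, IHz⟩ := IH
      have Ysucc : ∀ a b : ℤ, a ≤ t0 + (n + 1 : ℕ) → q.2.1 a b = 0 := by
        intro a b hab
        by_cases hTK : (a, b) ∈ TK2 t0 T L l
        · have hmem := memTK2.mp hTK
          simp only at hmem
          have ha : a ∈ Finset.Icc (t0 + l + 1) T := Finset.mem_Icc.mpr ⟨hmem.1, hmem.2.1⟩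
          have hc := hc3 a ha
          have hz0 : (∑ e ∈ (KT t0 T l).filter (fun e => e.2 = a), q.2.2.1 e.1 e.2) = 0 := by
            apply Finset.sum_eq_zero
            intro e he
            rw [Finset.mem_filter] at he
            have h1 := memKT.mp he.1
            apply IHz
            have h2 := he.2
            push_cast at hab ⊢
            omega
          rw [hz0] at hc
          have hy0 : (∑ e ∈ (TK2 t0 T L l).filter (fun e => e.1 = a), q.2.1 e.1 e.2) = 0 := by
            linarith
          exact (Finset.sum_eq_zero_iff_of_nonneg
            (fun e _ => hyn e.1 e.2)).mp hy0 (a, b) (Finset.mem_filter.mpr ⟨hTK, rfl⟩)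
        · exact hyv a b hTK
      refine ⟨Ysucc, ?_⟩
      intro a b hab
      by_cases hKT : (a, b) ∈ KT t0 T l
      · have hmem := memKT.mp hKT
        simp only at hmem
        have ha : a ∈ Finset.Icc t0 (T - 1) := Finset.mem_Icc.mpr ⟨hmem.1, by omega⟩
        have hc := hc2 a ha
        have hy0 : (∑ e ∈ (TK2 t0 T L l).filter (fun e => e.2 = a), q.2.1 e.1 e.2) = 0 := by
          apply Finset.sum_eq_zero
          intro e he
          rw [Finset.mem_filter] at he
          have h2 : e.1 ≤ e.2 := TK2_fst_le_snd hL he.1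
          apply Ysucc
          have h3 := he.2
          omega
        rw [hw a, hθ0 a ha, hy0] at hc
        have hz0 : (∑ e ∈ (KT t0 T l).filter (fun e => e.1 = a), q.2.2.1 e.1 e.2) = 0 := by
          linarith
        exact (Finset.sum_eq_zero_iff_of_nonneg
          (fun e _ => hzn e.1 e.2)).mp hz0 (a, b) (Finset.mem_filter.mpr ⟨hKT, rfl⟩)
      · exact hzv a b hKT
  have hyall : ∀ a b, q.2.1 a b = 0 := by
    intro a b
    have h := Int.self_le_toNat (a - t0)
    exact (main (a - t0).toNat).1 a b (by omega)
  have hzall : ∀ a b, q.2.2.1 a b = 0 := by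
    intro a b
    have h := Int.self_le_toNat (a - t0)
    exact (main (a - t0).toNat).2 a b (by omega)
  refine ⟨hyall, hzall, ?_⟩
  intro a
  by_cases h : a ∈ Finset.Icc t0 (T - 1)
  · exact hθ0 a h
  · exact htv a h

private lemma sum_pair_indic (s : Finset (ℤ × ℤ)) (t k : ℤ) :
    ∑ e ∈ s, (if e.1 = t ∧ e.2 = k then (1 : ℝ) else 0) = if (t, k) ∈ s then 1 else 0 := by
  have h : ∀ e ∈ s, (if e.1 = t ∧ e.2 = k then (1 : ℝ) else 0)
      = if e = (t, k) then 1 else 0 := by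
    intro e _
    by_cases hh : e = (t, k)
    · subst hh; simp
    · rw [if_neg hh, if_neg (fun hc => hh (Prod.ext_iff.mpr hc))]
  rw [Finset.sum_congr rfl h, Finset.sum_ite_eq' s (t, k) (fun _ => (1 : ℝ))]

private lemma sum_indic_fst {s : Finset (ℤ × ℤ)} {t k : ℤ} (h : (t, k) ∈ s) (a : ℤ) :
    ∑ e ∈ s.filter (fun e => e.1 = a), (if e.1 = t ∧ e.2 = k then (1 : ℝ) else 0)
      = if a = t then 1 else 0 := by
  rw [sum_pair_indic]
  simp only [Finset.mem_filter]
  by_cases ha : a = t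
  · rw [if_pos ⟨h, ha.symm⟩, if_pos ha]
  · rw [if_neg (fun hc => ha (hc.2.symm : a = t)), if_neg ha]

private lemma sum_indic_snd {s : Finset (ℤ × ℤ)} {t k : ℤ} (h : (t, k) ∈ s) (a : ℤ) :
    ∑ e ∈ s.filter (fun e => e.2 = a), (if e.1 = t ∧ e.2 = k then (1 : ℝ) else 0)
      = if a = k then 1 else 0 := by
  rw [sum_pair_indic]
  simp only [Finset.mem_filter]
  by_cases ha : a = k
  · rw [if_pos ⟨h, ha.symm⟩, if_pos ha]
  · rw [if_neg (fun hc => ha (hc.2.symm : a = k)), if_neg ha]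

/-- A binary "tail" of a path starting at the off-node `t`, dominated by `p`. -/
private structure IsTail (T L l t0 : ℤ) (p : Pt3) (t : ℤ) (x : Pt3) : Prop where
  w0 : ∀ a, x.1 a = 0
  ybin : ∀ a b, x.2.1 a b = 0 ∨ x.2.1 a b = 1
  zbin : ∀ a b, x.2.2.1 a b = 0 ∨ x.2.2.1 a b = 1
  tbin : ∀ a, x.2.2.2 a = 0 ∨ x.2.2.2 a = 1
  ysupp : ∀ a b, x.2.1 a b ≠ 0 → (a, b) ∈ TK2 t0 T L l ∧ t < a
  zsupp : ∀ a b, x.2.2.1 a b ≠ 0 → (a, b) ∈ KT t0 T l ∧ t ≤ a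
  tsupp : ∀ a, x.2.2.2 a ≠ 0 → a ∈ Finset.Icc t0 (T - 1) ∧ t ≤ a
  ydom : ∀ a b, x.2.1 a b ≠ 0 → 0 < p.2.1 a b
  zdom : ∀ a b, x.2.2.1 a b ≠ 0 → 0 < p.2.2.1 a b
  tdom : ∀ a, x.2.2.2 a ≠ 0 → 0 < p.2.2.2 a
  hc2 : ∀ a ∈ Finset.Icc t0 (T - 1),
    (∑ e ∈ (KT t0 T l).filter (fun e => e.1 = a), x.2.2.1 e.1 e.2) + x.2.2.2 a
      - (∑ e ∈ (TK2 t0 T L l).filter (fun e => e.2 = a), x.2.1 e.1 e.2)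
      = if a = t then 1 else 0
  hc3 : ∀ a ∈ Finset.Icc (t0 + l + 1) T,
    (∑ e ∈ (TK2 t0 T L l).filter (fun e => e.1 = a), x.2.1 e.1 e.2)
      - (∑ e ∈ (KT t0 T l).filter (fun e => e.2 = a), x.2.2.1 e.1 e.2) = 0

private lemma trace (hL : 1 ≤ L) (hl : 1 ≤ l) {p : Pt3} (hp : memFlow T L l t0 p) :
    ∀ n : ℕ, ∀ t : ℤ, t0 ≤ t → t ≤ T - 1 → (T - t).toNat ≤ n →
      (0 < p.1 t + ∑ e ∈ (TK2 t0 T L l).filter (fun e => e.2 = t), p.2.1 e.1 e.2) →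
      ∃ x : Pt3, IsTail T L l t0 p t x := by
  intro n
  induction n with
  | zero =>
    intro t _ ht2 hfuel _
    exfalso
    omega
  | succ n IH =>
    intro t ht1 ht2 hfuel hpos
    have hc2t := hp.2.1 t (Finset.mem_Icc.mpr ⟨ht1, ht2⟩)
    by_cases hth : 0 < p.2.2.2 t
    · refine ⟨(fun _ => 0, fun _ _ => 0, fun _ _ => 0, fun a => if a = t then 1 else 0),
        ?_, ?_, ?_, ?_, ?_, ?_, ?_, ?_, ?_, ?_, ?_, ?_⟩
      · intro a; rfl
      · intro a b; left; rfl
      · intro a b; left; rfl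
      · intro a; dsimp only; split_ifs <;> simp
      · intro a b h; exact absurd rfl h
      · intro a b h; exact absurd rfl h
      · intro a h
        dsimp only at h
        by_cases ha : a = t
        · subst ha; exact ⟨Finset.mem_Icc.mpr ⟨ht1, ht2⟩, le_refl a⟩
        · rw [if_neg ha] at h; exact absurd rfl h
      · intro a b h; exact absurd rfl h
      · intro a b h; exact absurd rfl h
      · intro a h
        dsimp only at h
        by_cases ha : a = t
        · subst ha; exact hth
        · rw [if_neg ha] at h; exact absurd rfl h
      · intro a _
        dsimp only
        rw [Finset.sum_eq_zero (fun e _ => rfl), Finset.sum_eq_zero (fun e _ => rfl)]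
        ring
      · intro a _
        dsimp only
        rw [Finset.sum_eq_zero (fun e _ => rfl), Finset.sum_eq_zero (fun e _ => rfl)]
        ring
    · -- θ_t = 0, so some z-edge out of t carries positive flow
      have hth0 : p.2.2.2 t = 0 := le_antisymm (not_lt.mp hth) (th_nn hp t)
      have hzOutpos : 0 < ∑ e ∈ (KT t0 T l).filter (fun e => e.1 = t), p.2.2.1 e.1 e.2 := by
        rw [hth0] at hc2t
        linarith
      have hex : ∃ e ∈ (KT t0 T l).filter (fun e => e.1 = t), 0 < p.2.2.1 e.1 e.2 := by
        by_contra hcon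
        push_neg at hcon
        have : (∑ e ∈ (KT t0 T l).filter (fun e => e.1 = t), p.2.2.1 e.1 e.2) ≤ 0 :=
          Finset.sum_nonpos hcon
        linarith
      obtain ⟨⟨t', k⟩, hef, hepos⟩ := hex
      rw [Finset.mem_filter] at hef
      obtain ⟨heKT, heq⟩ := hef
      simp only at heq hepos
      rw [heq] at heKT hepos
      clear heq
      have hkmem := memKT.mp heKT
      simp only at hkmem
      have hkIcc : k ∈ Finset.Icc (t0 + l + 1) T := Finset.mem_Icc.mpr ⟨by omega, by omega⟩
      have hc3k := hp.2.2.1 k hkIcc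
      have hmemzf : (t, k) ∈ (KT t0 T l).filter (fun e => e.2 = k) :=
        Finset.mem_filter.mpr ⟨heKT, rfl⟩
      have hzInk : p.2.2.1 t k ≤ ∑ e ∈ (KT t0 T l).filter (fun e => e.2 = k), p.2.2.1 e.1 e.2 :=
        Finset.single_le_sum (f := fun e => p.2.2.1 e.1 e.2)
          (fun e _ => z_nn hp e.1 e.2) hmemzf
      have hyOutpos : 0 < ∑ e ∈ (TK2 t0 T L l).filter (fun e => e.1 = k), p.2.1 e.1 e.2 := by
        linarith
      have hex2 : ∃ e ∈ (TK2 t0 T L l).filter (fun e => e.1 = k), 0 < p.2.1 e.1 e.2 := by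
        by_contra hcon
        push_neg at hcon
        have : (∑ e ∈ (TK2 t0 T L l).filter (fun e => e.1 = k), p.2.1 e.1 e.2) ≤ 0 :=
          Finset.sum_nonpos hcon
        linarith
      obtain ⟨⟨k'', k'⟩, hff, hfpos⟩ := hex2
      rw [Finset.mem_filter] at hff
      obtain ⟨hfTK, hfq⟩ := hff
      simp only at hfq hfpos
      rw [hfq] at hfTK hfpos
      clear hfq
      have hfmem := memTK2.mp hfTK
      simp only at hfmem
      have hkk' : k ≤ k' := TK2_fst_le_snd hL hfTK
      by_cases hk' : k' ≤ T - 1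
      · -- recurse from node k'
        have hmemyf : (k, k') ∈ (TK2 t0 T L l).filter (fun e => e.2 = k') :=
          Finset.mem_filter.mpr ⟨hfTK, rfl⟩
        have hyink' : p.2.1 k k'
            ≤ ∑ e ∈ (TK2 t0 T L l).filter (fun e => e.2 = k'), p.2.1 e.1 e.2 :=
          Finset.single_le_sum (f := fun e => p.2.1 e.1 e.2)
            (fun e _ => y_nn hp e.1 e.2) hmemyf
        have hw' := w_nn hp k'
        obtain ⟨x', hx'⟩ := IH k' (by omega) hk' (by omega) (by linarith)
        refine ⟨(fun _ => 0,
            fun a b => (if a = k ∧ b = k' then 1 else 0) + x'.2.1 a b,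
            fun a b => (if a = t ∧ b = k then 1 else 0) + x'.2.2.1 a b,
            fun a => x'.2.2.2 a),
          ?_, ?_, ?_, ?_, ?_, ?_, ?_, ?_, ?_, ?_, ?_, ?_⟩
        · intro a; rfl
        · intro a b
          dsimp only
          by_cases hab : a = k ∧ b = k'
          · have hx0 : x'.2.1 a b = 0 := by
              by_contra hne
              have h2 := (hx'.ysupp a b hne).2
              omega
            rw [if_pos hab, hx0]
            right; norm_num
          · rw [if_neg hab, zero_add]
            exact hx'.ybin a b
        · intro a b
          dsimp only
          by_cases hab : a = t ∧ b = k
          · have hx0 : x'.2.2.1 a b = 0 := by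
              by_contra hne
              have h2 := (hx'.zsupp a b hne).2
              omega
            rw [if_pos hab, hx0]
            right; norm_num
          · rw [if_neg hab, zero_add]
            exact hx'.zbin a b
        · intro a; exact hx'.tbin a
        · intro a b h
          dsimp only at h
          by_cases hab : a = k ∧ b = k'
          · obtain ⟨rfl, rfl⟩ := hab
            exact ⟨hfTK, by omega⟩
          · rw [if_neg hab, zero_add] at h
            obtain ⟨h1, h2⟩ := hx'.ysupp a b h
            exact ⟨h1, by omega⟩
        · intro a b h
          dsimp only at h
          by_cases hab : a = t ∧ b = k
          · obtain ⟨rfl, rfl⟩ := hab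
            exact ⟨heKT, le_refl a⟩
          · rw [if_neg hab, zero_add] at h
            obtain ⟨h1, h2⟩ := hx'.zsupp a b h
            exact ⟨h1, by omega⟩
        · intro a h
          obtain ⟨h1, h2⟩ := hx'.tsupp a h
          exact ⟨h1, by omega⟩
        · intro a b h
          dsimp only at h
          by_cases hab : a = k ∧ b = k'
          · obtain ⟨rfl, rfl⟩ := hab
            exact hfpos
          · rw [if_neg hab, zero_add] at h
            exact hx'.ydom a b h
        · intro a b h
          dsimp only at h
          by_cases hab : a = t ∧ b = k
          · obtain ⟨rfl, rfl⟩ := hab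
            exact hepos
          · rw [if_neg hab, zero_add] at h
            exact hx'.zdom a b h
        · intro a h; exact hx'.tdom a h
        · intro a ha
          dsimp only
          rw [Finset.sum_add_distrib, Finset.sum_add_distrib,
            sum_indic_fst heKT a, sum_indic_snd hfTK a]
          have hx2 := hx'.hc2 a ha
          by_cases h1 : a = k'
          · have hnt : ¬ a = t := by omega
            rw [if_pos h1] at hx2 ⊢
            rw [if_neg hnt]
            linarith
          · rw [if_neg h1] at hx2 ⊢
            linarith
        · intro a ha
          dsimp only
          rw [Finset.sum_add_distrib, Finset.sum_add_distrib,
            sum_indic_fst hfTK a, sum_indic_snd heKT a]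
          have hx3 := hx'.hc3 a ha
          linarith
      · -- k' = T : the path ends with the edge y_{k,T}
        have hk'T : k' = T := by omega
        refine ⟨(fun _ => 0,
            fun a b => if a = k ∧ b = k' then 1 else 0,
            fun a b => if a = t ∧ b = k then 1 else 0,
            fun _ => 0),
          ?_, ?_, ?_, ?_, ?_, ?_, ?_, ?_, ?_, ?_, ?_, ?_⟩
        · intro a; rfl
        · intro a b; dsimp only; split_ifs <;> simp
        · intro a b; dsimp only; split_ifs <;> simp
        · intro a; left; rfl
        · intro a b h
          dsimp only at h
          by_cases hab : a = k ∧ b = k'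
          · obtain ⟨rfl, rfl⟩ := hab
            exact ⟨hfTK, by omega⟩
          · rw [if_neg hab] at h; exact absurd rfl h
        · intro a b h
          dsimp only at h
          by_cases hab : a = t ∧ b = k
          · obtain ⟨rfl, rfl⟩ := hab
            exact ⟨heKT, le_refl a⟩
          · rw [if_neg hab] at h; exact absurd rfl h
        · intro a h; exact absurd rfl h
        · intro a b h
          dsimp only at h
          by_cases hab : a = k ∧ b = k'
          · obtain ⟨rfl, rfl⟩ := hab
            exact hfpos
          · rw [if_neg hab] at h; exact absurd rfl h
        · intro a b h
          dsimp only at h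
          by_cases hab : a = t ∧ b = k
          · obtain ⟨rfl, rfl⟩ := hab
            exact hepos
          · rw [if_neg hab] at h; exact absurd rfl h
        · intro a h; exact absurd rfl h
        · intro a ha
          dsimp only
          rw [sum_indic_fst heKT a, sum_indic_snd hfTK a]
          rw [Finset.mem_Icc] at ha
          have hnk' : ¬ a = k' := by omega
          rw [if_neg hnk']
          ring
        · intro a _
          dsimp only
          rw [sum_indic_fst hfTK a, sum_indic_snd heKT a]
          ring

open scoped Classical

/-- Binary points of the flow polytope. -/
private def BSet (T L l t0 : ℤ) : Set Pt3 :=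
  {x | memFlow T L l t0 x ∧ (∀ a, x.1 a = 0 ∨ x.1 a = 1) ∧
    (∀ a b, x.2.1 a b = 0 ∨ x.2.1 a b = 1) ∧
    (∀ a b, x.2.2.1 a b = 0 ∨ x.2.2.1 a b = 1) ∧
    (∀ a, x.2.2.2 a = 0 ∨ x.2.2.2 a = 1)}

private lemma path_exists (hL : 1 ≤ L) (hl : 1 ≤ l) {p : Pt3}
    (hp : memFlow T L l t0 p) :
    ∃ x ∈ BSet T L l t0,
      (∀ a, x.1 a ≠ 0 → 0 < p.1 a) ∧ (∀ a b, x.2.1 a b ≠ 0 → 0 < p.2.1 a b) ∧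
      (∀ a b, x.2.2.1 a b ≠ 0 → 0 < p.2.2.1 a b) ∧ (∀ a, x.2.2.2 a ≠ 0 → 0 < p.2.2.2 a) := by
  have hex : ∃ a ∈ Finset.Icc t0 T, p.1 a ≠ 0 :=
    Finset.exists_ne_zero_of_sum_ne_zero (by rw [hp.1]; exact one_ne_zero)
  obtain ⟨t1, ht1mem', ht1ne⟩ := hex
  have ht1mem := Finset.mem_Icc.mp ht1mem'
  have hw1 : 0 < p.1 t1 := lt_of_le_of_ne (w_nn hp t1) (Ne.symm ht1ne)
  by_cases ht1 : t1 ≤ T - 1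
  · have hyin : 0 ≤ ∑ e ∈ (TK2 t0 T L l).filter (fun e => e.2 = t1), p.2.1 e.1 e.2 :=
      Finset.sum_nonneg fun e _ => y_nn hp e.1 e.2
    obtain ⟨x', hx'⟩ := trace hL hl hp (T - t1).toNat t1 ht1mem.1 ht1 (le_refl _)
      (by linarith)
    refine ⟨(fun a => if a = t1 then 1 else 0, x'.2.1, x'.2.2.1, x'.2.2.2),
      ⟨⟨?_, ?_, ?_, ?_, ?_, ?_, ?_, ?_, ?_, ?_, ?_⟩, ?_, ?_, ?_, ?_⟩, ?_, ?_, ?_, ?_⟩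
    · dsimp only
      rw [Finset.sum_ite_eq' (Finset.Icc t0 T) t1 (fun _ => (1 : ℝ)), if_pos ht1mem']
    · intro a ha
      dsimp only
      have h2 := hx'.hc2 a ha
      linarith
    · intro a ha
      exact hx'.hc3 a ha
    · intro a _
      dsimp only
      split_ifs <;> norm_num
    · intro e _
      rcases hx'.ybin e.1 e.2 with h | h <;> rw [h] <;> norm_num
    · intro e _
      rcases hx'.zbin e.1 e.2 with h | h <;> rw [h] <;> norm_num
    · intro a _
      rcases hx'.tbin a with h | h <;> rw [h] <;> norm_num
    · intro a ha
      dsimp only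
      rw [if_neg (fun hc => ha (by rw [hc]; exact ht1mem'))]
    · intro a b h
      by_contra hne
      exact h (hx'.ysupp a b hne).1
    · intro a b h
      by_contra hne
      exact h (hx'.zsupp a b hne).1
    · intro a ha
      by_contra hne
      exact ha (hx'.tsupp a hne).1
    · intro a; dsimp only; split_ifs <;> simp
    · exact hx'.ybin
    · exact hx'.zbin
    · exact hx'.tbin
    · intro a h
      dsimp only at h
      by_cases ha : a = t1
      · subst ha; exact hw1
      · rw [if_neg ha] at h; exact absurd rfl h
    · exact hx'.ydom
    · exact hx'.zdom
    · exact hx'.tdom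
  · -- t1 = T
    refine ⟨(fun a => if a = t1 then 1 else 0, fun _ _ => 0, fun _ _ => 0, fun _ => 0),
      ⟨⟨?_, ?_, ?_, ?_, ?_, ?_, ?_, ?_, ?_, ?_, ?_⟩, ?_, ?_, ?_, ?_⟩, ?_, ?_, ?_, ?_⟩
    · dsimp only
      rw [Finset.sum_ite_eq' (Finset.Icc t0 T) t1 (fun _ => (1 : ℝ)), if_pos ht1mem']
    · intro a ha
      dsimp only
      rw [Finset.sum_eq_zero (fun e _ => rfl), Finset.sum_eq_zero (fun e _ => rfl)]
      rw [Finset.mem_Icc] at ha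
      rw [if_neg (by omega : ¬ a = t1)]
      ring
    · intro a _
      dsimp only
      rw [Finset.sum_eq_zero (fun e _ => rfl), Finset.sum_eq_zero (fun e _ => rfl)]
      ring
    · intro a _
      dsimp only
      split_ifs <;> norm_num
    · intro e _; exact le_refl 0
    · intro e _; exact le_refl 0
    · intro a _; exact le_refl 0
    · intro a ha
      dsimp only
      rw [if_neg (fun hc => ha (by rw [hc]; exact ht1mem'))]
    · intro a b _; rfl
    · intro a b _; rfl
    · intro a _; rfl
    · intro a; dsimp only; split_ifs <;> simp
    · intro a b; left; rfl
    · intro a b; left; rfl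
    · intro a; left; rfl
    · intro a h
      dsimp only at h
      by_cases ha : a = t1
      · subst ha; exact hw1
      · rw [if_neg ha] at h; exact absurd rfl h
    · intro a b h; exact absurd rfl h
    · intro a b h; exact absurd rfl h
    · intro a h; exact absurd rfl h

private noncomputable def suppN (T L l t0 : ℤ) (p : Pt3) : ℕ :=
  ((Finset.Icc t0 T).filter (fun a => p.1 a ≠ 0)).card
    + ((TK2 t0 T L l).filter (fun e => p.2.1 e.1 e.2 ≠ 0)).card
    + ((KT t0 T l).filter (fun e => p.2.2.1 e.1 e.2 ≠ 0)).card
    + ((Finset.Icc t0 (T - 1)).filter (fun a => p.2.2.2 a ≠ 0)).card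

private lemma sum_lin {α : Type*} (s : Finset α) (c d : ℝ) (f g : α → ℝ) :
    ∑ e ∈ s, c * (f e - d * g e) = c * ((∑ e ∈ s, f e) - d * ∑ e ∈ s, g e) := by
  have h : ∀ e ∈ s, c * (f e - d * g e) = c * f e - (c * d) * g e := fun e _ => by ring
  rw [Finset.sum_congr rfl h, Finset.sum_sub_distrib, ← Finset.mul_sum, ← Finset.mul_sum]
  ring

private lemma decomp_step (hL : 1 ≤ L) (hl : 1 ≤ l) {p : Pt3}
    (hp : memFlow T L l t0 p) :
    p ∈ BSet T L l t0 ∨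
      ∃ (m : ℝ) (x p' : Pt3), x ∈ BSet T L l t0 ∧ memFlow T L l t0 p' ∧
        0 < m ∧ m < 1 ∧ p = m • x + (1 - m) • p' ∧
        suppN T L l t0 p' < suppN T L l t0 p := by
  obtain ⟨x, hxB, hdw, hdy, hdz, hdt⟩ := path_exists hL hl hp
  obtain ⟨hxF, hbw, hby, hbz, hbt⟩ := hxB
  obtain ⟨x1, x2, x3, x4, x5, x6, x7, x8, x9, x10, x11⟩ := hxF
  set Fs : Finset ℝ :=
    (((Finset.Icc t0 T).filter (fun a => x.1 a ≠ 0)).image p.1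
      ∪ ((TK2 t0 T L l).filter (fun e => x.2.1 e.1 e.2 ≠ 0)).image (fun e => p.2.1 e.1 e.2))
      ∪ (((KT t0 T l).filter (fun e => x.2.2.1 e.1 e.2 ≠ 0)).image (fun e => p.2.2.1 e.1 e.2)
      ∪ ((Finset.Icc t0 (T - 1)).filter (fun a => x.2.2.2 a ≠ 0)).image p.2.2.2) with hFs
  have hne : Fs.Nonempty := by
    obtain ⟨t1, ht1mem, ht1ne⟩ : ∃ a ∈ Finset.Icc t0 T, x.1 a ≠ 0 :=
      Finset.exists_ne_zero_of_sum_ne_zero (by rw [x1]; exact one_ne_zero)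
    exact ⟨p.1 t1, Finset.mem_union_left _ (Finset.mem_union_left _
      (Finset.mem_image.mpr ⟨t1, Finset.mem_filter.mpr ⟨ht1mem, ht1ne⟩, rfl⟩))⟩
  set m : ℝ := Fs.min' hne with hm
  have hall : ∀ r ∈ Fs, 0 < r := by
    intro r hr
    rw [hFs] at hr
    simp only [Finset.mem_union, Finset.mem_image, Finset.mem_filter] at hr
    rcases hr with (⟨a, ⟨_, hne'⟩, rfl⟩ | ⟨e, ⟨_, hne'⟩, rfl⟩) |
      (⟨e, ⟨_, hne'⟩, rfl⟩ | ⟨a, ⟨_, hne'⟩, rfl⟩)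
    · exact hdw a hne'
    · exact hdy e.1 e.2 hne'
    · exact hdz e.1 e.2 hne'
    · exact hdt a hne'
  have hmpos : 0 < m := hall _ (Fs.min'_mem hne)
  have hmw : ∀ a, x.1 a ≠ 0 → m ≤ p.1 a := by
    intro a h
    apply Finset.min'_le
    have hmem : a ∈ Finset.Icc t0 T := by
      by_contra hc
      exact h (x8 a hc)
    exact Finset.mem_union_left _ (Finset.mem_union_left _
      (Finset.mem_image.mpr ⟨a, Finset.mem_filter.mpr ⟨hmem, h⟩, rfl⟩))
  have hmy : ∀ a b, x.2.1 a b ≠ 0 → m ≤ p.2.1 a b := by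
    intro a b h
    apply Finset.min'_le
    have hmem : (a, b) ∈ TK2 t0 T L l := by
      by_contra hc
      exact h (x9 a b hc)
    exact Finset.mem_union_left _ (Finset.mem_union_right _
      (Finset.mem_image.mpr ⟨(a, b), Finset.mem_filter.mpr ⟨hmem, h⟩, rfl⟩))
  have hmz : ∀ a b, x.2.2.1 a b ≠ 0 → m ≤ p.2.2.1 a b := by
    intro a b h
    apply Finset.min'_le
    have hmem : (a, b) ∈ KT t0 T l := by
      by_contra hc
      exact h (x10 a b hc)
    exact Finset.mem_union_right _ (Finset.mem_union_left _
      (Finset.mem_image.mpr ⟨(a, b), Finset.mem_filter.mpr ⟨hmem, h⟩, rfl⟩))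
  have hmt : ∀ a, x.2.2.2 a ≠ 0 → m ≤ p.2.2.2 a := by
    intro a h
    apply Finset.min'_le
    have hmem : a ∈ Finset.Icc t0 (T - 1) := by
      by_contra hc
      exact h (x11 a hc)
    exact Finset.mem_union_right _ (Finset.mem_union_right _
      (Finset.mem_image.mpr ⟨a, Finset.mem_filter.mpr ⟨hmem, h⟩, rfl⟩))
  by_cases hm1 : 1 ≤ m
  · -- p is itself the binary point x
    left
    have hwq : ∀ a, p.1 a - x.1 a = 0 := by
      have hnn : ∀ a ∈ Finset.Icc t0 T, 0 ≤ p.1 a - x.1 a := by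
        intro a _
        rcases hbw a with h | h
        · rw [h]; simpa using w_nn hp a
        · have := hmw a (by rw [h]; exact one_ne_zero)
          rw [h]; linarith
      have hsum : ∑ a ∈ Finset.Icc t0 T, (p.1 a - x.1 a) = 0 := by
        rw [Finset.sum_sub_distrib, hp.1, x1]; ring
      intro a
      by_cases hmem : a ∈ Finset.Icc t0 T
      · exact (Finset.sum_eq_zero_iff_of_nonneg hnn).mp hsum a hmem
      · rw [hp.2.2.2.2.2.2.2.1 a hmem, x8 a hmem]; ring
    have hq := homog_zero hL hl (q := (fun a => p.1 a - x.1 a,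
        fun a b => p.2.1 a b - x.2.1 a b,
        fun a b => p.2.2.1 a b - x.2.2.1 a b,
        fun a => p.2.2.2 a - x.2.2.2 a))
      hwq
      (by
        intro a b
        dsimp only
        rcases hby a b with h | h
        · rw [h]; simpa using y_nn hp a b
        · have := hmy a b (by rw [h]; exact one_ne_zero)
          rw [h]; linarith)
      (by
        intro a b
        dsimp only
        rcases hbz a b with h | h
        · rw [h]; simpa using z_nn hp a b
        · have := hmz a b (by rw [h]; exact one_ne_zero)
          rw [h]; linarith)
      (by
        intro a _
        dsimp only
        rcases hbt a with h | h
        · rw [h]; simpa using th_nn hp a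
        · have := hmt a (by rw [h]; exact one_ne_zero)
          rw [h]; linarith)
      (by
        intro t ht
        dsimp only
        rw [Finset.sum_sub_distrib, Finset.sum_sub_distrib]
        have h1 := hp.2.1 t ht
        have h2 := x2 t ht
        linarith)
      (by
        intro t ht
        dsimp only
        rw [Finset.sum_sub_distrib, Finset.sum_sub_distrib]
        have h1 := hp.2.2.1 t ht
        have h2 := x3 t ht
        linarith)
      (by
        intro a b hab
        dsimp only
        rw [hp.2.2.2.2.2.2.2.2.1 a b hab, x9 a b hab]; ring)
      (by
        intro a b hab
        dsimp only
        rw [hp.2.2.2.2.2.2.2.2.2.1 a b hab, x10 a b hab]; ring)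
      (by
        intro a ha
        dsimp only
        rw [hp.2.2.2.2.2.2.2.2.2.2 a ha, x11 a ha]; ring)
    obtain ⟨hqy, hqz, hqt⟩ := hq
    refine ⟨hp, ?_, ?_, ?_, ?_⟩
    · intro a
      have := hwq a
      have hpa : p.1 a = x.1 a := by linarith
      rw [hpa]; exact hbw a
    · intro a b
      have := hqy a b
      dsimp only at this
      have hpa : p.2.1 a b = x.2.1 a b := by linarith
      rw [hpa]; exact hby a b
    · intro a b
      have := hqz a b
      dsimp only at this
      have hpa : p.2.2.1 a b = x.2.2.1 a b := by linarith
      rw [hpa]; exact hbz a b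
    · intro a
      have := hqt a
      dsimp only at this
      have hpa : p.2.2.2 a = x.2.2.2 a := by linarith
      rw [hpa]; exact hbt a
  · -- 0 < m < 1 : peel off the path x with weight m
    right
    push_neg at hm1
    have hc0 : (0 : ℝ) < 1 - m := by linarith
    have hcinv : (0 : ℝ) ≤ (1 - m)⁻¹ := le_of_lt (inv_pos.mpr hc0)
    have hcne : (1 : ℝ) - m ≠ 0 := ne_of_gt hc0
    set p' : Pt3 := (fun a => (1 - m)⁻¹ * (p.1 a - m * x.1 a),
      fun a b => (1 - m)⁻¹ * (p.2.1 a b - m * x.2.1 a b),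
      fun a b => (1 - m)⁻¹ * (p.2.2.1 a b - m * x.2.2.1 a b),
      fun a => (1 - m)⁻¹ * (p.2.2.2 a - m * x.2.2.2 a)) with hp'def
  
    have hp'F : memFlow T L l t0 p' := by
      refine ⟨?_, ?_, ?_, ?_, ?_, ?_, ?_, ?_, ?_, ?_, ?_⟩
      · rw [hp'def]
        dsimp only
        rw [sum_lin, hp.1, x1]
        field_simp
      · intro t ht
        rw [hp'def]
        dsimp only
        rw [sum_lin, sum_lin]
        have h1 := hp.2.1 t ht
        have h2 := x2 t ht
        linear_combination (1 - m)⁻¹ * h1 - ((1 - m)⁻¹ * m) * h2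
      · intro t ht
        rw [hp'def]
        dsimp only
        rw [sum_lin, sum_lin]
        have h1 := hp.2.2.1 t ht
        have h2 := x3 t ht
        linear_combination (1 - m)⁻¹ * h1 - ((1 - m)⁻¹ * m) * h2
      · intro a _
        rw [hp'def]
        dsimp only
        apply mul_nonneg hcinv
        rcases hbw a with h | h
        · rw [h]; have := w_nn hp a; linarith
        · have := hmw a (by rw [h]; exact one_ne_zero)
          rw [h]; linarith
      · intro e _
        rw [hp'def]
        dsimp only
        apply mul_nonneg hcinv
        rcases hby e.1 e.2 with h | h
        · rw [h]; have := y_nn hp e.1 e.2; linarith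
        · have := hmy e.1 e.2 (by rw [h]; exact one_ne_zero)
          rw [h]; linarith
      · intro e _
        rw [hp'def]
        dsimp only
        apply mul_nonneg hcinv
        rcases hbz e.1 e.2 with h | h
        · rw [h]; have := z_nn hp e.1 e.2; linarith
        · have := hmz e.1 e.2 (by rw [h]; exact one_ne_zero)
          rw [h]; linarith
      · intro a _
        rw [hp'def]
        dsimp only
        apply mul_nonneg hcinv
        rcases hbt a with h | h
        · rw [h]; have := th_nn hp a; linarith
        · have := hmt a (by rw [h]; exact one_ne_zero)
          rw [h]; linarith
      · intro a ha
        rw [hp'def]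
        dsimp only
        rw [hp.2.2.2.2.2.2.2.1 a ha, x8 a ha]; ring
      · intro a b hab
        rw [hp'def]
        dsimp only
        rw [hp.2.2.2.2.2.2.2.2.1 a b hab, x9 a b hab]; ring
      · intro a b hab
        rw [hp'def]
        dsimp only
        rw [hp.2.2.2.2.2.2.2.2.2.1 a b hab, x10 a b hab]; ring
      · intro a ha
        rw [hp'def]
        dsimp only
        rw [hp.2.2.2.2.2.2.2.2.2.2 a ha, x11 a ha]; ring
    have hcomb : p = m • x + (1 - m) • p' := by
      rw [hp'def]
      refine Prod.ext_iff.mpr ⟨funext fun a => ?_,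
        Prod.ext_iff.mpr ⟨funext fun a => funext fun b => ?_,
        Prod.ext_iff.mpr ⟨funext fun a => funext fun b => ?_, funext fun a => ?_⟩⟩⟩ <;>
      · simp only [Prod.fst_add, Prod.snd_add, Prod.smul_fst, Prod.smul_snd,
          Pi.add_apply, Pi.smul_apply, smul_eq_mul]
        field_simp
        ring
    -- support inclusions
    have hsw : (Finset.Icc t0 T).filter (fun a => p'.1 a ≠ 0)
        ⊆ (Finset.Icc t0 T).filter (fun a => p.1 a ≠ 0) := by
      intro a ha
      rw [Finset.mem_filter] at ha ⊢
      refine ⟨ha.1, ?_⟩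
      intro h0
      apply ha.2
      have hx0 : x.1 a = 0 := by
        by_contra hc
        have := hdw a hc
        linarith
      rw [hp'def]
      dsimp only
      rw [h0, hx0]
      ring
    have hsy : (TK2 t0 T L l).filter (fun e => p'.2.1 e.1 e.2 ≠ 0)
        ⊆ (TK2 t0 T L l).filter (fun e => p.2.1 e.1 e.2 ≠ 0) := by
      intro e he
      rw [Finset.mem_filter] at he ⊢
      refine ⟨he.1, ?_⟩
      intro h0
      apply he.2
      have hx0 : x.2.1 e.1 e.2 = 0 := by
        by_contra hc
        have := hdy e.1 e.2 hc
        linarith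
      rw [hp'def]
      dsimp only
      rw [h0, hx0]
      ring
    have hsz : (KT t0 T l).filter (fun e => p'.2.2.1 e.1 e.2 ≠ 0)
        ⊆ (KT t0 T l).filter (fun e => p.2.2.1 e.1 e.2 ≠ 0) := by
      intro e he
      rw [Finset.mem_filter] at he ⊢
      refine ⟨he.1, ?_⟩
      intro h0
      apply he.2
      have hx0 : x.2.2.1 e.1 e.2 = 0 := by
        by_contra hc
        have := hdz e.1 e.2 hc
        linarith
      rw [hp'def]
      dsimp only
      rw [h0, hx0]
      ring
    have hst : (Finset.Icc t0 (T - 1)).filter (fun a => p'.2.2.2 a ≠ 0)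
        ⊆ (Finset.Icc t0 (T - 1)).filter (fun a => p.2.2.2 a ≠ 0) := by
      intro a ha
      rw [Finset.mem_filter] at ha ⊢
      refine ⟨ha.1, ?_⟩
      intro h0
      apply ha.2
      have hx0 : x.2.2.2 a = 0 := by
        by_contra hc
        have := hdt a hc
        linarith
      rw [hp'def]
      dsimp only
      rw [h0, hx0]
      ring
    -- one coordinate achieving the minimum drops out of the support
    have hlt : suppN T L l t0 p' < suppN T L l t0 p := by
      have hmmem : m ∈ Fs := by rw [hm]; exact Fs.min'_mem hne
      rw [hFs] at hmmem
      simp only [Finset.mem_union, Finset.mem_image, Finset.mem_filter] at hmmem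
      have hcw := Finset.card_le_card hsw
      have hcy := Finset.card_le_card hsy
      have hcz := Finset.card_le_card hsz
      have hct := Finset.card_le_card hst
      rcases hmmem with (⟨a, ⟨hmem, hne'⟩, hval⟩ | ⟨e, ⟨hmem, hne'⟩, hval⟩) |
        (⟨e, ⟨hmem, hne'⟩, hval⟩ | ⟨a, ⟨hmem, hne'⟩, hval⟩)
      · have hx1 : x.1 a = 1 := (hbw a).resolve_left hne'
        have hplt : (Finset.Icc t0 T).filter (fun a => p'.1 a ≠ 0)
            ⊂ (Finset.Icc t0 T).filter (fun a => p.1 a ≠ 0) := by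
          refine ⟨hsw, fun hsub => ?_⟩
          have hamem : a ∈ (Finset.Icc t0 T).filter (fun a => p.1 a ≠ 0) :=
            Finset.mem_filter.mpr ⟨hmem, by rw [hval]; exact ne_of_gt hmpos⟩
          have := Finset.mem_filter.mp (hsub hamem)
          apply this.2
          rw [hp'def]
          dsimp only
          rw [hval, hx1]
          ring
        have := Finset.card_lt_card hplt
        unfold suppN
        omega
      · have hx1 : x.2.1 e.1 e.2 = 1 := (hby e.1 e.2).resolve_left hne'
        have hplt : (TK2 t0 T L l).filter (fun e => p'.2.1 e.1 e.2 ≠ 0)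
            ⊂ (TK2 t0 T L l).filter (fun e => p.2.1 e.1 e.2 ≠ 0) := by
          refine ⟨hsy, fun hsub => ?_⟩
          have hamem : e ∈ (TK2 t0 T L l).filter (fun e => p.2.1 e.1 e.2 ≠ 0) :=
            Finset.mem_filter.mpr ⟨hmem, by rw [hval]; exact ne_of_gt hmpos⟩
          have := Finset.mem_filter.mp (hsub hamem)
          apply this.2
          rw [hp'def]
          dsimp only
          rw [hval, hx1]
          ring
        have := Finset.card_lt_card hplt
        unfold suppN
        omega
      · have hx1 : x.2.2.1 e.1 e.2 = 1 := (hbz e.1 e.2).resolve_left hne'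
        have hplt : (KT t0 T l).filter (fun e => p'.2.2.1 e.1 e.2 ≠ 0)
            ⊂ (KT t0 T l).filter (fun e => p.2.2.1 e.1 e.2 ≠ 0) := by
          refine ⟨hsz, fun hsub => ?_⟩
          have hamem : e ∈ (KT t0 T l).filter (fun e => p.2.2.1 e.1 e.2 ≠ 0) :=
            Finset.mem_filter.mpr ⟨hmem, by rw [hval]; exact ne_of_gt hmpos⟩
          have := Finset.mem_filter.mp (hsub hamem)
          apply this.2
          rw [hp'def]
          dsimp only
          rw [hval, hx1]
          ring
        have := Finset.card_lt_card hplt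
        unfold suppN
        omega
      · have hx1 : x.2.2.2 a = 1 := (hbt a).resolve_left hne'
        have hplt : (Finset.Icc t0 (T - 1)).filter (fun a => p'.2.2.2 a ≠ 0)
            ⊂ (Finset.Icc t0 (T - 1)).filter (fun a => p.2.2.2 a ≠ 0) := by
          refine ⟨hst, fun hsub => ?_⟩
          have hamem : a ∈ (Finset.Icc t0 (T - 1)).filter (fun a => p.2.2.2 a ≠ 0) :=
            Finset.mem_filter.mpr ⟨hmem, by rw [hval]; exact ne_of_gt hmpos⟩
          have := Finset.mem_filter.mp (hsub hamem)
          apply this.2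
          rw [hp'def]
          dsimp only
          rw [hval, hx1]
          ring
        have := Finset.card_lt_card hplt
        unfold suppN
        omega
    exact ⟨m, x, p', ⟨⟨x1, x2, x3, x4, x5, x6, x7, x8, x9, x10, x11⟩, hbw, hby, hbz, hbt⟩,
      hp'F, hmpos, hm1, hcomb, hlt⟩

private lemma convexP : Convex ℝ {p : Pt3 | memFlow T L l t0 p} := by
  intro u hu v hv a b ha hb hab
  simp only [Set.mem_setOf_eq] at hu hv ⊢
  obtain ⟨u1, u2, u3, u4, u5, u6, u7, u8, u9, u10, u11⟩ := hu
  obtain ⟨v1, v2, v3, v4, v5, v6, v7, v8, v9, v10, v11⟩ := hv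
  have hw : ∀ t, (a • u + b • v).1 t = a * u.1 t + b * v.1 t := fun _ => rfl
  have hy : ∀ t k, (a • u + b • v).2.1 t k = a * u.2.1 t k + b * v.2.1 t k := fun _ _ => rfl
  have hz : ∀ t k, (a • u + b • v).2.2.1 t k = a * u.2.2.1 t k + b * v.2.2.1 t k :=
    fun _ _ => rfl
  have hth : ∀ t, (a • u + b • v).2.2.2 t = a * u.2.2.2 t + b * v.2.2.2 t := fun _ => rfl
  refine ⟨?_, ?_, ?_, ?_, ?_, ?_, ?_, ?_, ?_, ?_, ?_⟩
  · rw [Finset.sum_congr rfl (fun t _ => hw t), Finset.sum_add_distrib,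
      ← Finset.mul_sum, ← Finset.mul_sum, u1, v1]
    linarith
  · intro t ht
    have e1 := u2 t ht
    have e2 := v2 t ht
    have hzs : ∑ e ∈ (KT t0 T l).filter (fun e => e.1 = t), (a • u + b • v).2.2.1 e.1 e.2
        = a * (∑ e ∈ (KT t0 T l).filter (fun e => e.1 = t), u.2.2.1 e.1 e.2)
          + b * (∑ e ∈ (KT t0 T l).filter (fun e => e.1 = t), v.2.2.1 e.1 e.2) := by
      rw [Finset.sum_congr rfl (fun e _ => hz e.1 e.2), Finset.sum_add_distrib,
        ← Finset.mul_sum, ← Finset.mul_sum]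
    have hys : ∑ e ∈ (TK2 t0 T L l).filter (fun e => e.2 = t), (a • u + b • v).2.1 e.1 e.2
        = a * (∑ e ∈ (TK2 t0 T L l).filter (fun e => e.2 = t), u.2.1 e.1 e.2)
          + b * (∑ e ∈ (TK2 t0 T L l).filter (fun e => e.2 = t), v.2.1 e.1 e.2) := by
      rw [Finset.sum_congr rfl (fun e _ => hy e.1 e.2), Finset.sum_add_distrib,
        ← Finset.mul_sum, ← Finset.mul_sum]
    rw [hw t, hth t, hzs, hys]
    linear_combination a * e1 + b * e2
  · intro t ht
    have e1 := u3 t ht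
    have e2 := v3 t ht
    have hys : ∑ e ∈ (TK2 t0 T L l).filter (fun e => e.1 = t), (a • u + b • v).2.1 e.1 e.2
        = a * (∑ e ∈ (TK2 t0 T L l).filter (fun e => e.1 = t), u.2.1 e.1 e.2)
          + b * (∑ e ∈ (TK2 t0 T L l).filter (fun e => e.1 = t), v.2.1 e.1 e.2) := by
      rw [Finset.sum_congr rfl (fun e _ => hy e.1 e.2), Finset.sum_add_distrib,
        ← Finset.mul_sum, ← Finset.mul_sum]
    have hzs : ∑ e ∈ (KT t0 T l).filter (fun e => e.2 = t), (a • u + b • v).2.2.1 e.1 e.2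
        = a * (∑ e ∈ (KT t0 T l).filter (fun e => e.2 = t), u.2.2.1 e.1 e.2)
          + b * (∑ e ∈ (KT t0 T l).filter (fun e => e.2 = t), v.2.2.1 e.1 e.2) := by
      rw [Finset.sum_congr rfl (fun e _ => hz e.1 e.2), Finset.sum_add_distrib,
        ← Finset.mul_sum, ← Finset.mul_sum]
    rw [hys, hzs]
    linear_combination a * e1 + b * e2
  · intro t ht
    rw [hw t]
    exact add_nonneg (mul_nonneg ha (u4 t ht)) (mul_nonneg hb (v4 t ht))
  · intro e he
    rw [hy e.1 e.2]
    exact add_nonneg (mul_nonneg ha (u5 e he)) (mul_nonneg hb (v5 e he))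
  · intro e he
    rw [hz e.1 e.2]
    exact add_nonneg (mul_nonneg ha (u6 e he)) (mul_nonneg hb (v6 e he))
  · intro t ht
    rw [hth t]
    exact add_nonneg (mul_nonneg ha (u7 t ht)) (mul_nonneg hb (v7 t ht))
  · intro t ht
    rw [hw t, u8 t ht, v8 t ht]; ring
  · intro t k htk
    rw [hy t k, u9 t k htk, v9 t k htk]; ring
  · intro t k htk
    rw [hz t k, u10 t k htk, v10 t k htk]; ring
  · intro t ht
    rw [hth t, u11 t ht, v11 t ht]; ring

private lemma decomp_all (hL : 1 ≤ L) (hl : 1 ≤ l) :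
    ∀ n : ℕ, ∀ p : Pt3, memFlow T L l t0 p → suppN T L l t0 p ≤ n →
      p ∈ convexHull ℝ (BSet T L l t0) := by
  intro n
  induction n with
  | zero =>
    intro p hp hs
    rcases decomp_step hL hl hp with hB | ⟨m, x, p', hxB, hp'F, hm0, hm1, hcomb, hlt⟩
    · exact subset_convexHull ℝ _ hB
    · omega
  | succ n IH =>
    intro p hp hs
    rcases decomp_step hL hl hp with hB | ⟨m, x, p', hxB, hp'F, hm0, hm1, hcomb, hlt⟩
    · exact subset_convexHull ℝ _ hB
    · have hp'c := IH p' hp'F (by omega)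
      rw [hcomb]
      exact (convex_convexHull ℝ (BSet T L l t0)) (subset_convexHull ℝ _ hxB) hp'c
        (le_of_lt hm0) (by linarith) (by ring)

end FlowProof


/-- integrality of the state-transition network-flow polytope:
every extreme point has all of its coordinates in `{0,1}`. -/
theorem flow_polytope_integral (T L l s0 t0 : ℤ)
    (hT : 2 ≤ T) (hL : 1 ≤ L) (hl : 1 ≤ l) (hs0 : 1 ≤ s0)
    (ht0 : t0 = max (L - s0) 0) (ht0T : t0 ≤ T - 1) :
    ∀ p ∈ Set.extremePoints ℝ {p : Pt3 | memFlow T L l t0 p},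
      (∀ t, p.1 t = 0 ∨ p.1 t = 1) ∧
      (∀ t k, p.2.1 t k = 0 ∨ p.2.1 t k = 1) ∧
      (∀ k t, p.2.2.1 k t = 0 ∨ p.2.2.1 k t = 1) ∧
      (∀ t, p.2.2.2 t = 0 ∨ p.2.2.2 t = 1) := by
  intro p hpext
  have hpP : memFlow T L l t0 p := hpext.1
  have hpconv : p ∈ convexHull ℝ (BSet T L l t0) :=
    decomp_all hL hl (suppN T L l t0 p) p hpP (le_refl _)
  have hsub : convexHull ℝ (BSet T L l t0) ⊆ {p : Pt3 | memFlow T L l t0 p} :=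
    convexHull_min (fun x hx => hx.1) convexP
  have hpe2 : p ∈ Set.extremePoints ℝ (convexHull ℝ (BSet T L l t0)) :=
    ⟨hpconv, fun x1 h1 x2 h2 hseg => hpext.2 (hsub h1) (hsub h2) hseg⟩
  have hpB := extremePoints_convexHull_subset hpe2
  exact ⟨hpB.2.1, hpB.2.2.1, hpB.2.2.2.1, hpB.2.2.2.2⟩

end EUC
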